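/- Let b ∈ ℂ and suppose g₁, g₂, g₃ ∈ ℂ[∂,λ] satisfy, as identities in ℂ[∂,λ,μ]: (∂+λ+μ+b)·g₁(∂,λ) = (∂+2μ)·g₁(∂+μ,λ), (∂+λ+μ+b)·g₂(∂,λ) = (∂+μ+b)·g₂(∂+μ,λ), and (∂+λ+μ+b)·g₃(∂,λ) = (∂+(3/2)μ+b/2)·g₃(∂+μ,λ). Then g₁ = g₂ = g₃ = 0. -/
import Mathlib

lemma aux13 (c : ℂ) (p : MvPolynomial (Fin 2) ℂ)
    (h : ∀ x l : ℂ, (l + c) * MvPolynomial.eval ![x, l] p = 0) : p = 0 := by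
  have hq : (MvPolynomial.X 1 + MvPolynomial.C c) * p = 0 := by
    apply MvPolynomial.funext
    intro v
    have hv : ![v 0, v 1] = v := by
      funext i; fin_cases i <;> rfl
    simp only [map_mul, map_add, MvPolynomial.eval_X, MvPolynomial.eval_C, map_zero]
    have := h (v 0) (v 1)
    rwa [hv] at this
  rcases mul_eq_zero.mp hq with h' | h'
  · exfalso
    have := congrArg (MvPolynomial.eval ![(0:ℂ), 1 - c]) h'
    simp at this
  · exact h'

/-- From applying a degree-c conformal derivation of CSV(1,b) with D(L_i)=0 to
[L_0 μ M_i] = (∂+μ+b)M_i: the three resulting identities force g₁ = g₂ = g₃ = 0. -/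
theorem stmt13 (b : ℂ) (g₁ g₂ g₃ : MvPolynomial (Fin 2) ℂ)
    (h1 : ∀ x l μ : ℂ,
      (x + l + μ + b) * MvPolynomial.eval ![x, l] g₁
        = (x + 2*μ) * MvPolynomial.eval ![x + μ, l] g₁)
    (h2 : ∀ x l μ : ℂ,
      (x + l + μ + b) * MvPolynomial.eval ![x, l] g₂
        = (x + μ + b) * MvPolynomial.eval ![x + μ, l] g₂)
    (h3 : ∀ x l μ : ℂ,
      (x + l + μ + b) * MvPolynomial.eval ![x, l] g₃
        = (x + (3/2)*μ + b/2) * MvPolynomial.eval ![x + μ, l] g₃) :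
    g₁ = 0 ∧ g₂ = 0 ∧ g₃ = 0 := by
  refine ⟨aux13 b g₁ ?_, aux13 0 g₂ ?_, aux13 (b/2) g₃ ?_⟩
  · intro x l
    have := h1 x l 0
    simp only [add_zero, mul_zero] at this
    linear_combination this
  · intro x l
    have := h2 x l 0
    simp only [add_zero] at this
    linear_combination this
  · intro x l
    have := h3 x l 0
    simp only [add_zero, mul_zero] at this
    linear_combination this
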